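/- Let 0 < β₁, β₂ < 1 with λ := β₁/√β₂ < 1, and let g_1, …, g_t ∈ ℝ^d. Define m_t = (1−β₁) Σ_{i=1}^t β₁^{t−i} g_i and v_t = (1−β₂) Σ_{i=1}^t β₂^{t−i} g_i ⊙ g_i, and let v̂_t ∈ ℝ^d satisfy v̂_{t,j} ≥ v_{t,j} for every j. Then Σ_{j=1}^d m_{t,j}²/√(v̂_{t,j}) ≤ ( (1−β₁)/√(1−β₂) ) · Σ_{j=1}^d Σ_{i=1}^t λ^{t−i} |g_{i,j}|, where terms with v̂_{t,j} = 0 are interpreted as 0. -/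

import Mathlib

open Finset

private lemma sqrt_pow_aux {x : ℝ} (hx : 0 ≤ x) (n : ℕ) :
    Real.sqrt (x ^ n) = Real.sqrt x ^ n := by
  induction n with
  | zero => simp
  | succ k ih => rw [pow_succ, pow_succ, Real.sqrt_mul (pow_nonneg hx k), ih]

private lemma geom_icc_le (t : ℕ) {β : ℝ} (h0 : 0 ≤ β) (h1 : β < 1) :
    ∑ i ∈ Finset.Icc 1 t, β ^ (t - i) ≤ 1 / (1 - β) := by
  have hre : ∑ i ∈ Finset.Icc 1 t, β ^ (t - i) = ∑ k ∈ Finset.range t, β ^ k := by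
    refine Finset.sum_nbij' (fun i => t - i) (fun k => t - k) ?_ ?_ ?_ ?_ ?_
    · intro i hi; simp only [Finset.mem_Icc] at hi; simp only [Finset.mem_range]; omega
    · intro k hk; simp only [Finset.mem_range] at hk; simp only [Finset.mem_Icc]; omega
    · intro i hi; simp only [Finset.mem_Icc] at hi; omega
    · intro k hk; simp only [Finset.mem_range] at hk; omega
    · intro i hi; rfl
  have hb : (1:ℝ) - β > 0 := by linarith
  have hpow : 0 ≤ β ^ t := pow_nonneg h0 t
  rw [hre, geom_sum_eq (by linarith : β ≠ 1),
    show (β ^ t - 1) / (β - 1) = (1 - β ^ t) / (1 - β) by rw [← neg_div_neg_eq]; ring_nf]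
  gcongr
  nlinarith

/-- the single-step bound inside Lemma 1 of the paper.  With
`m_t = (1−β₁) Σ_{i=1}^t β₁^{t−i} g_i`, `v_t = (1−β₂) Σ_{i=1}^t β₂^{t−i} g_i ⊙ g_i`,
`λ = β₁/√β₂ < 1` and `v̂_{t,j} ≥ v_{t,j}`,
`Σ_j m_{t,j}²/√(v̂_{t,j}) ≤ ((1−β₁)/√(1−β₂)) Σ_j Σ_{i=1}^t λ^{t−i} |g_{i,j}|`.
(Coordinates with `v̂_{t,j} = 0` contribute `0`; Lean's division by zero is zero.) -/
theorem convgAdam_moment_energy_step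
    (d t : ℕ) (β₁ β₂ : ℝ)
    (hβ₁ : 0 < β₁) (hβ₁' : β₁ < 1) (hβ₂ : 0 < β₂) (hβ₂' : β₂ < 1)
    (hlam : β₁ / Real.sqrt β₂ < 1)
    (g : ℕ → Fin d → ℝ)
    (m v : Fin d → ℝ)
    (hm : ∀ j, m j = (1 - β₁) * ∑ i ∈ Finset.Icc 1 t, β₁ ^ (t - i) * g i j)
    (hv : ∀ j, v j = (1 - β₂) * ∑ i ∈ Finset.Icc 1 t, β₂ ^ (t - i) * (g i j) ^ 2)
    (vhat : Fin d → ℝ) (hvhat : ∀ j, v j ≤ vhat j) :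
    ∑ j, (m j) ^ 2 / Real.sqrt (vhat j)
      ≤ ((1 - β₁) / Real.sqrt (1 - β₂)) *
          ∑ j, ∑ i ∈ Finset.Icc 1 t, (β₁ / Real.sqrt β₂) ^ (t - i) * |g i j| := by
  have hsb2 : 0 < Real.sqrt β₂ := Real.sqrt_pos.2 hβ₂
  have hs1b2 : 0 < Real.sqrt (1 - β₂) := Real.sqrt_pos.2 (by linarith)
  rw [Finset.mul_sum]
  refine Finset.sum_le_sum fun j _ => ?_
  set S := Finset.Icc 1 t with hS
  have hvnn : 0 ≤ v j := by
    rw [hv]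
    exact mul_nonneg (by linarith) (Finset.sum_nonneg fun i _ =>
      mul_nonneg (pow_nonneg hβ₂.le _) (sq_nonneg _))
  have hvhnn : 0 ≤ vhat j := le_trans hvnn (hvhat j)
  have hterm : ∀ i ∈ S, (1 - β₂) * (β₂ ^ (t - i) * (g i j) ^ 2) ≤ vhat j := by
    intro i hi
    refine le_trans ?_ (hvhat j)
    rw [hv, hS]
    refine mul_le_mul_of_nonneg_left ?_ (by linarith)
    exact Finset.single_le_sum (f := fun i => β₂ ^ (t - i) * (g i j) ^ 2)
      (fun i _ => mul_nonneg (pow_nonneg hβ₂.le _) (sq_nonneg _)) hi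
  have hRHSnn : 0 ≤ ∑ i ∈ S, (β₁ / Real.sqrt β₂) ^ (t - i) * |g i j| :=
    Finset.sum_nonneg fun i _ => mul_nonneg (pow_nonneg (by positivity) _) (abs_nonneg _)
  rcases eq_or_lt_of_le hvhnn with hv0 | hvpos
  · -- vhat j = 0 : every g i j = 0, so m j = 0
    have hall : ∀ i ∈ S, g i j = 0 := by
      intro i hi
      have h := hterm i hi
      rw [← hv0] at h
      by_contra hne
      have h2 : 0 < (g i j) ^ 2 := by positivity
      have hp : 0 < (1 - β₂) * (β₂ ^ (t - i) * (g i j) ^ 2) :=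
        mul_pos (by linarith) (mul_pos (pow_pos hβ₂ _) h2)
      linarith
    have hm0 : m j = 0 := by
      rw [hm]
      rw [Finset.sum_eq_zero fun i hi => by rw [hall i hi, mul_zero]]
      ring
    rw [hm0]
    simpa using mul_nonneg (div_nonneg (by linarith) hs1b2.le) hRHSnn
  · have hsq : 0 < Real.sqrt (vhat j) := Real.sqrt_pos.2 hvpos
    have hCS : (m j) ^ 2 ≤ (1 - β₁) * ∑ i ∈ S, β₁ ^ (t - i) * (g i j) ^ 2 := by
      have key : (∑ i ∈ S, β₁ ^ (t - i) * g i j) ^ 2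
          ≤ (∑ i ∈ S, β₁ ^ (t - i)) * ∑ i ∈ S, β₁ ^ (t - i) * (g i j) ^ 2 := by
        have h := Finset.sum_mul_sq_le_sq_mul_sq S
          (fun i => Real.sqrt (β₁ ^ (t - i))) (fun i => Real.sqrt (β₁ ^ (t - i)) * g i j)
        have e1 : ∀ i : ℕ, Real.sqrt (β₁ ^ (t - i)) * (Real.sqrt (β₁ ^ (t - i)) * g i j)
            = β₁ ^ (t - i) * g i j := by
          intro i
          rw [← mul_assoc, Real.mul_self_sqrt (pow_nonneg hβ₁.le _)]
        have e2 : ∀ i : ℕ, Real.sqrt (β₁ ^ (t - i)) ^ 2 = β₁ ^ (t - i) := fun i =>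
          Real.sq_sqrt (pow_nonneg hβ₁.le _)
        have e3 : ∀ i : ℕ, (Real.sqrt (β₁ ^ (t - i)) * g i j) ^ 2
            = β₁ ^ (t - i) * (g i j) ^ 2 := by
          intro i; rw [mul_pow, e2]
        simp only [e1, e2, e3] at h
        exact h
      have hgeo : ∑ i ∈ S, β₁ ^ (t - i) ≤ 1 / (1 - β₁) := geom_icc_le t hβ₁.le hβ₁'
      have hsum2nn : 0 ≤ ∑ i ∈ S, β₁ ^ (t - i) * (g i j) ^ 2 :=
        Finset.sum_nonneg fun i _ => mul_nonneg (pow_nonneg hβ₁.le _) (sq_nonneg _)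
      have hne : (1:ℝ) - β₁ ≠ 0 := by linarith
      calc (m j) ^ 2 = (1 - β₁) ^ 2 * (∑ i ∈ S, β₁ ^ (t - i) * g i j) ^ 2 := by
            rw [hm]; ring
        _ ≤ (1 - β₁) ^ 2 * ((1 / (1 - β₁)) * ∑ i ∈ S, β₁ ^ (t - i) * (g i j) ^ 2) := by
            refine mul_le_mul_of_nonneg_left (le_trans key ?_) (sq_nonneg _)
            exact mul_le_mul_of_nonneg_right hgeo hsum2nn
        _ = (1 - β₁) * ∑ i ∈ S, β₁ ^ (t - i) * (g i j) ^ 2 := by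
            field_simp [hne]
    have htermdiv : ∀ i ∈ S,
        β₁ ^ (t - i) * (g i j) ^ 2 / Real.sqrt (vhat j)
          ≤ (β₁ / Real.sqrt β₂) ^ (t - i) * |g i j| / Real.sqrt (1 - β₂) := by
      intro i hi
      rcases eq_or_ne (g i j) 0 with hg0 | hg0
      · simp [hg0]
      · have habs : 0 < |g i j| := abs_pos.2 hg0
        have hlow : Real.sqrt (1 - β₂) * (Real.sqrt β₂ ^ (t - i) * |g i j|)
            ≤ Real.sqrt (vhat j) := by
          have h := Real.sqrt_le_sqrt (hterm i hi)
          calc Real.sqrt (1 - β₂) * (Real.sqrt β₂ ^ (t - i) * |g i j|)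
              = Real.sqrt ((1 - β₂) * (β₂ ^ (t - i) * (g i j) ^ 2)) := by
                rw [Real.sqrt_mul (by linarith), Real.sqrt_mul (pow_nonneg hβ₂.le _),
                  ← sqrt_pow_aux hβ₂.le, Real.sqrt_sq_eq_abs]
            _ ≤ _ := h
        have hlowpos : 0 < Real.sqrt (1 - β₂) * (Real.sqrt β₂ ^ (t - i) * |g i j|) :=
          mul_pos hs1b2 (mul_pos (pow_pos hsb2 _) habs)
        have hnum : 0 ≤ β₁ ^ (t - i) * (g i j) ^ 2 :=
          mul_nonneg (pow_nonneg hβ₁.le _) (sq_nonneg _)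
        calc β₁ ^ (t - i) * (g i j) ^ 2 / Real.sqrt (vhat j)
            ≤ β₁ ^ (t - i) * (g i j) ^ 2
                / (Real.sqrt (1 - β₂) * (Real.sqrt β₂ ^ (t - i) * |g i j|)) :=
              div_le_div_of_nonneg_left hnum hlowpos hlow
          _ = (β₁ / Real.sqrt β₂) ^ (t - i) * |g i j| / Real.sqrt (1 - β₂) := by
              rw [div_pow]
              field_simp
              rw [← sq_abs (g i j)]
    calc (m j) ^ 2 / Real.sqrt (vhat j)
        ≤ ((1 - β₁) * ∑ i ∈ S, β₁ ^ (t - i) * (g i j) ^ 2) / Real.sqrt (vhat j) := by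
          gcongr
      _ = (1 - β₁) * ∑ i ∈ S, β₁ ^ (t - i) * (g i j) ^ 2 / Real.sqrt (vhat j) := by
          rw [mul_div_assoc, Finset.sum_div]
      _ ≤ (1 - β₁) * ∑ i ∈ S, (β₁ / Real.sqrt β₂) ^ (t - i) * |g i j| / Real.sqrt (1 - β₂) := by
          refine mul_le_mul_of_nonneg_left (Finset.sum_le_sum htermdiv) (by linarith)
      _ = ((1 - β₁) / Real.sqrt (1 - β₂)) * ∑ i ∈ S, (β₁ / Real.sqrt β₂) ^ (t - i) * |g i j| := by
          rw [← Finset.sum_div, div_mul_eq_mul_div, mul_div_assoc]
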